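/- Fix an integer k ≥ 3 and a positive integer M, set ρ = M/k, write M = qk + r with q = ⌊M/k⌋ and 0 ≤ r < k, and let U be the k×k circulant matrix whose first row has r entries equal to q+1 followed by k−r entries equal to q. Let A ∈ A_{k,M} and set T = (t_{i,j}) = A − U. If ρ ≥ 4 and max_{i,j} |t_{i,j}| ≤ ρ/9, then | log(w(A)/w(U)) − log w̃(A) | ≤ (4/ρ²) Σ_{i,j} (|t_{i,j}| + 1)³ + (3/(2ρ)) Σ_{i,j} |t_{i,j}|, where w̃(A) = exp( −(1/2)·((k−2)/(k−1))·(1/ρ)·Σ_{i,j} t_{i,j}² ). -/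

import Mathlib

open Finset

private lemma log_taylor {x : ℝ} (hx : |x| ≤ 1/2) : |Real.log (1+x) - x| ≤ 2*x^2 := by
  have h1 : |(-x)| < 1 := by rw [abs_neg]; linarith
  have h := Real.abs_log_sub_add_sum_range_le h1 1
  simp only [Finset.sum_range_one, pow_one, Nat.cast_zero, zero_add, div_one, abs_neg] at h
  rw [show 1 - -x = 1 + x by ring,
    show (-x) + Real.log (1+x) = Real.log (1+x) - x by ring] at h
  refine h.trans ?_
  have h4 : (1:ℝ)/2 ≤ 1 - |x| := by linarith
  calc |x|^(1+1) / (1 - |x|) ≤ |x|^2 / (1/2) := by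
        apply div_le_div_of_nonneg_left (by positivity) (by norm_num) h4
    _ = 2 * x^2 := by rw [sq_abs]; ring

set_option maxHeartbeats 1000000 in
private lemma psi_bound (ρ x0 y0 z : ℝ) (hρ : 4 ≤ ρ)
    (hx0 : 7*ρ/8 ≤ x0) (hy0 : 2*ρ ≤ y0) (hz : |z - x0| ≤ ρ/9 + 1/2) :
    |Real.log z + Real.log (y0 + x0 - z) - (Real.log x0 + Real.log y0)
      - (z-x0)*(1/x0 - 1/y0)| ≤ 16/5*(z-x0)^2/ρ^2 := by
  have hρ0 : (0:ℝ) < ρ := by linarith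
  have hx0p : (0:ℝ) < x0 := by linarith
  have hy0p : (0:ℝ) < y0 := by linarith
  have hzb := abs_le.1 hz
  have he1 : |(z - x0)/x0| ≤ 1/2 := by
    rw [abs_div, abs_of_pos hx0p, div_le_iff₀ hx0p]
    rw [abs_le]; constructor <;> nlinarith [hzb.1, hzb.2]
  have he2 : |(-(z - x0))/y0| ≤ 1/2 := by
    rw [abs_div, abs_of_pos hy0p, div_le_iff₀ hy0p, abs_neg, abs_le]
    constructor <;> nlinarith [hzb.1, hzb.2]
  have h1p : (0:ℝ) < 1 + (z - x0)/x0 := by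
    have := (abs_le.1 he1).1; linarith
  have h2p : (0:ℝ) < 1 + (-(z - x0))/y0 := by
    have := (abs_le.1 he2).1; linarith
  have hz' : z = x0 * (1 + (z - x0)/x0) := by field_simp; ring
  have hw' : y0 + x0 - z = y0 * (1 + (-(z - x0))/y0) := by field_simp; ring
  have lz : Real.log z = Real.log x0 + Real.log (1 + (z-x0)/x0) := by
    rw [← Real.log_mul hx0p.ne' h1p.ne', ← hz']
  have lw : Real.log (y0 + x0 - z) = Real.log y0 + Real.log (1 + (-(z-x0))/y0) := by
    rw [← Real.log_mul hy0p.ne' h2p.ne', ← hw']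
  have hb1 := log_taylor he1
  have hb2 := log_taylor he2
  have htgt : Real.log z + Real.log (y0 + x0 - z)
      - (Real.log x0 + Real.log y0) - (z - x0)*(1/x0 - 1/y0)
      = (Real.log (1 + (z-x0)/x0) - (z-x0)/x0) + (Real.log (1 + (-(z-x0))/y0) - (-(z-x0))/y0) := by
    rw [lz, lw]; field_simp; ring
  rw [htgt]
  have hsq1 : ((z-x0)/x0)^2 ≤ 64/49*((z-x0)^2/ρ^2) := by
    rw [div_pow]
    have hx2 : (7*ρ/8)^2 ≤ x0^2 := by nlinarith
    calc (z-x0)^2/x0^2 ≤ (z-x0)^2/((7*ρ/8)^2) := by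
          apply div_le_div_of_nonneg_left (by positivity) (by positivity) hx2
      _ = 64/49*((z-x0)^2/ρ^2) := by field_simp; ring
  have hsq2 : ((-(z-x0))/y0)^2 ≤ 1/4*((z-x0)^2/ρ^2) := by
    have hy2 : (2*ρ)^2 ≤ y0^2 := by nlinarith
    have e : ((-(z-x0))/y0)^2 = (z-x0)^2/y0^2 := by ring
    rw [e]
    calc (z-x0)^2/y0^2 ≤ (z-x0)^2/((2*ρ)^2) := by
          apply div_le_div_of_nonneg_left (by positivity) (by positivity) hy2
      _ = 1/4*((z-x0)^2/ρ^2) := by rw [show (2*ρ)^2 = 4*ρ^2 from by ring,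
            show 1/4*((z-x0)^2/ρ^2) = (z-x0)^2/(4*ρ^2) from by ring]
  refine le_trans (abs_add_le _ _) ?_
  calc |Real.log (1 + (z-x0)/x0) - (z-x0)/x0| + |Real.log (1 + (-(z-x0))/y0) - (-(z-x0))/y0|
      ≤ 2*((z-x0)/x0)^2 + 2*((-(z-x0))/y0)^2 := by linarith
    _ ≤ 16/5*((z-x0)^2/ρ^2) := by nlinarith [hsq1, hsq2]
    _ = 16/5*(z-x0)^2/ρ^2 := by ring

private lemma tele (M u : ℕ) : ∀ a : ℕ, u ≤ a → a ≤ M →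
    (Real.log ((M-a).factorial : ℝ) - Real.log (a.factorial : ℝ))
      - (Real.log ((M-u).factorial : ℝ) - Real.log (u.factorial : ℝ))
    = -∑ m ∈ Finset.Ioc u a, (Real.log (m:ℝ) + Real.log ((M:ℝ) + 1 - (m:ℝ))) := by
  intro a ha haM
  induction a, ha using Nat.le_induction with
  | base => simp
  | succ n hn ih =>
    have hnM : n ≤ M := by omega
    rw [Finset.sum_Ioc_succ_top hn]
    have hcast : ((M - n : ℕ) : ℝ) = (M:ℝ) - n := Nat.cast_sub hnM
    have hMn0 : (0:ℝ) < ((M - n : ℕ) : ℝ) := by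
      have : 0 < M - n := by omega
      exact_mod_cast this
    have e1 : Real.log ((M - n).factorial : ℝ)
        = Real.log ((M - n : ℕ) : ℝ) + Real.log ((M - (n+1)).factorial : ℝ) := by
      have h : M - n = (M - (n+1)) + 1 := by omega
      rw [h, Nat.factorial_succ, ← h]
      push_cast
      rw [Real.log_mul hMn0.ne' (by exact_mod_cast (Nat.cast_pos.2 (Nat.factorial_pos _)).ne')]
    have e2 : Real.log ((n+1).factorial : ℝ)
        = Real.log ((n+1 : ℕ) : ℝ) + Real.log (n.factorial : ℝ) := by
      rw [Nat.factorial_succ]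
      push_cast
      rw [Real.log_mul (by positivity) (by exact_mod_cast (Nat.cast_pos.2 (Nat.factorial_pos _)).ne')]
    have e3 : (M:ℝ) + 1 - ((n:ℝ) + 1) = ((M - n : ℕ) : ℝ) := by
      rw [hcast]; ring
    push_cast
    rw [e3]
    push_cast at e2
    linarith [ih hnM, e1, e2]

private lemma sumlin (x0 : ℝ) (u : ℕ) : ∀ a : ℕ, u ≤ a →
    ∑ m ∈ Finset.Ioc u a, ((m:ℝ) - x0)
    = ((a:ℝ)-(u:ℝ))^2/2 + ((a:ℝ)-(u:ℝ))*((u:ℝ) - x0 + 1/2) := by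
  intro a ha
  induction a, ha using Nat.le_induction with
  | base => simp
  | succ n hn ih =>
    rw [Finset.sum_Ioc_succ_top hn, ih]
    push_cast
    ring

private lemma assemble (ρ s X : ℝ) (hρ : 4 ≤ ρ) (hs : 0 ≤ s)
    (hX : |X| ≤ 1/ρ^2 * s^2/2 + 3/(2*ρ)*s + s*(16/5*(s+1/2)^2/ρ^2)) :
    |X| ≤ 4/ρ^2*(s+1)^3 + 3/(2*ρ)*s := by
  have hρ0 : (0:ℝ) < ρ := by linarith
  have h2 : 1/ρ^2 * s^2/2 + s*(16/5*(s+1/2)^2/ρ^2) ≤ 4/ρ^2*(s+1)^3 := by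
    have hpoly : s^2/2 + s*(16/5*(s+1/2)^2) ≤ 4*(s+1)^3 := by nlinarith [pow_nonneg hs 2, pow_nonneg hs 3]
    have e1 : 1/ρ^2 * s^2/2 + s*(16/5*(s+1/2)^2/ρ^2) = (s^2/2 + s*(16/5*(s+1/2)^2)) * (1/ρ^2) := by
      ring
    have e2 : 4/ρ^2*(s+1)^3 = (4*(s+1)^3) * (1/ρ^2) := by ring
    rw [e1, e2]
    exact mul_le_mul_of_nonneg_right hpoly (by positivity)
  linarith

private lemma urow (k q r : ℕ) (hk : 0 < k) (hrk : r ≤ k) (i : Fin k) :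
    ∑ j : Fin k, (if ((j:ℕ) + k - (i:ℕ)) % k < r then q + 1 else q) = k*q + r := by
  have hik : (i:ℕ) ≤ k := le_of_lt i.isLt
  set φ : Fin k → Fin k := fun j => ⟨((j:ℕ) + k - (i:ℕ)) % k, Nat.mod_lt _ hk⟩ with hφ
  have hinj : Function.Injective φ := by
    have hleft : Function.LeftInverse (fun j : Fin k => (⟨((j:ℕ) + (i:ℕ)) % k, Nat.mod_lt _ hk⟩ : Fin k)) φ := by
      intro j
      apply Fin.ext
      show (((j:ℕ) + k - (i:ℕ)) % k + (i:ℕ)) % k = (j:ℕ)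
      rw [Nat.mod_add_mod, show (j:ℕ) + k - (i:ℕ) + (i:ℕ) = (j:ℕ) + k by omega,
        Nat.add_mod_right, Nat.mod_eq_of_lt j.isLt]
    exact hleft.injective
  have hbij : Function.Bijective φ := Finite.injective_iff_bijective.1 hinj
  have hcomp : ∑ j : Fin k, (if ((j:ℕ) + k - (i:ℕ)) % k < r then q + 1 else q)
      = ∑ j : Fin k, (if ((φ j : Fin k) : ℕ) < r then q + 1 else q) := rfl
  rw [hcomp, Function.Bijective.sum_comp hbij (fun j : Fin k => if (j:ℕ) < r then q + 1 else q)]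
  rw [Fin.sum_univ_eq_sum_range (fun n => if n < r then q + 1 else q) k]
  have h1 : ∀ n, (if n < r then q + 1 else q) = q + (if n < r then 1 else 0) := by
    intro n; split <;> omega
  simp only [h1]
  rw [Finset.sum_add_distrib, Finset.sum_const, Finset.card_range, smul_eq_mul]
  have h3 : ∑ x ∈ Finset.range k, (if x < r then 1 else 0)
      = ((Finset.range k).filter (· < r)).card := (Finset.card_filter _ _).symm
  have h2 : (Finset.range k).filter (· < r) = Finset.range r := by
    ext n; simp only [Finset.mem_filter, Finset.mem_range]; omega
  rw [h3, h2, Finset.card_range]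

private lemma abs3 (x y z : ℝ) : |x - y - z| ≤ |x| + |y| + |z| := by
  calc |x - y - z| = |x + (-y) + (-z)| := by ring_nf
    _ ≤ |x + (-y)| + |(-z)| := abs_add_le _ _
    _ ≤ |x| + |(-y)| + |(-z)| := by gcongr; exact abs_add_le _ _
    _ = |x| + |y| + |z| := by rw [abs_neg, abs_neg]

set_option maxHeartbeats 2000000 in
private lemma entry_bound (M a u q : ℕ) (ρ x0 y0 C B D : ℝ)
    (hρ4 : 4 ≤ ρ)
    (hx0q : x0 = (q:ℝ) + 1/2)
    (hxy : y0 + x0 = (M:ℝ) + 1)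
    (hx0ρ : 7*ρ/8 ≤ x0) (hy0ρ : 2*ρ ≤ y0)
    (hC : C = Real.log x0 + Real.log y0)
    (hBdef : B = 1/x0 - 1/y0)
    (hB0 : 0 ≤ B) (hB1 : B ≤ 3/(2*ρ))
    (hDB : |D - B| ≤ 1/ρ^2)
    (hqu : q ≤ u) (huq : u ≤ q + 1) (haM : a ≤ M) (huM : u ≤ M)
    (ht : |(a:ℝ) - (u:ℝ)| ≤ ρ/9) :
    |(Real.log ((M-a).factorial : ℝ) - Real.log (a.factorial : ℝ))
      - (Real.log ((M-u).factorial : ℝ) - Real.log (u.factorial : ℝ))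
      + ((a:ℝ) - (u:ℝ))*C + D/2*((a:ℝ)-(u:ℝ))^2|
      ≤ 4/ρ^2*(|(a:ℝ)-(u:ℝ)| + 1)^3 + 3/(2*ρ)*|(a:ℝ)-(u:ℝ)| := by
  have hρ0 : (0:ℝ) < ρ := by linarith
  have hquR : (q:ℝ) ≤ u := Nat.cast_le.2 hqu
  have huqR : (u:ℝ) ≤ (q:ℝ) + 1 := by exact_mod_cast Nat.cast_le.2 huq
  -- the ψ-sum bound, shared shape for both cases
  have hψsum : ∀ lo hi : ℕ, lo ≤ hi → hi ≤ M → ((lo:ℝ) = u ∨ (hi:ℝ) = u) →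
      ((hi:ℝ) - lo ≤ ρ/9) →
      |∑ m ∈ Finset.Ioc lo hi,
        (Real.log (m:ℝ) + Real.log ((M:ℝ) + 1 - (m:ℝ)) - C - ((m:ℝ)-x0)*B)|
      ≤ ((hi:ℝ) - lo) * (16/5*(((hi:ℝ)-lo)+1/2)^2/ρ^2) := by
    intro lo hi hlh hhiM hside hs9
    have hsnn : (0:ℝ) ≤ (hi:ℝ) - lo := by
      have := Nat.cast_le (α := ℝ).2 hlh; linarith
    have hmem : ∀ m ∈ Finset.Ioc lo hi,
        |Real.log (m:ℝ) + Real.log ((M:ℝ) + 1 - (m:ℝ)) - C - ((m:ℝ)-x0)*B|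
        ≤ 16/5*(((hi:ℝ)-lo)+1/2)^2/ρ^2 := by
      intro m hm
      rw [Finset.mem_Ioc] at hm
      have hml : (lo:ℝ) < m := by exact_mod_cast hm.1
      have hml1 : (lo:ℝ) + 1 ≤ m := by exact_mod_cast hm.1
      have hmh : (m:ℝ) ≤ hi := by exact_mod_cast hm.2
      -- |m - x0| ≤ (hi - lo) + 1/2  (using that lo or hi equals u ∈ [q, q+1])
      have hmx : |(m:ℝ) - x0| ≤ ((hi:ℝ)-lo) + 1/2 := by
        rw [abs_le]
        rcases hside with h | h <;> constructor <;> nlinarith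
      have hmx9 : |(m:ℝ) - x0| ≤ ρ/9 + 1/2 := by
        rw [abs_le] at hmx ⊢
        constructor <;> [linarith [hmx.1]; linarith [hmx.2]]
      have hMm : (M:ℝ) + 1 - (m:ℝ) = y0 + x0 - m := by linarith
      rw [hMm, hC, hBdef]
      calc |Real.log (m:ℝ) + Real.log (y0 + x0 - m) - (Real.log x0 + Real.log y0)
            - ((m:ℝ)-x0)*(1/x0 - 1/y0)|
          ≤ 16/5*((m:ℝ)-x0)^2/ρ^2 := psi_bound ρ x0 y0 m hρ4 hx0ρ hy0ρ hmx9
        _ ≤ 16/5*(((hi:ℝ)-lo)+1/2)^2/ρ^2 := by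
            have h1 : ((m:ℝ)-x0)^2 ≤ (((hi:ℝ)-lo)+1/2)^2 := by
              have := abs_le.1 hmx
              nlinarith [this.1, this.2]
            gcongr
    refine le_trans (Finset.abs_sum_le_sum_abs _ _) ?_
    calc ∑ m ∈ Finset.Ioc lo hi,
          |Real.log (m:ℝ) + Real.log ((M:ℝ) + 1 - (m:ℝ)) - C - ((m:ℝ)-x0)*B|
        ≤ (Finset.Ioc lo hi).card • (16/5*(((hi:ℝ)-lo)+1/2)^2/ρ^2) :=
        Finset.sum_le_card_nsmul _ _ _ hmem
      _ = ((hi:ℝ) - lo) * (16/5*(((hi:ℝ)-lo)+1/2)^2/ρ^2) := by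
        rw [Nat.card_Ioc, nsmul_eq_mul, Nat.cast_sub hlh]
  rcases le_total u a with hc | hc
  · -- case u ≤ a
    have hs : (0:ℝ) ≤ (a:ℝ) - u := by
      have := Nat.cast_le (α := ℝ).2 hc; linarith
    have habs : |(a:ℝ) - u| = (a:ℝ) - u := abs_of_nonneg hs
    have htele := tele M u a hc haM
    have hsplit : ∑ m ∈ Finset.Ioc u a, (Real.log (m:ℝ) + Real.log ((M:ℝ) + 1 - (m:ℝ)))
        = ((a:ℝ)-u)*C + B*(((a:ℝ)-u)^2/2 + ((a:ℝ)-u)*((u:ℝ) - x0 + 1/2))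
          + ∑ m ∈ Finset.Ioc u a,
            (Real.log (m:ℝ) + Real.log ((M:ℝ) + 1 - (m:ℝ)) - C - ((m:ℝ)-x0)*B) := by
      rw [Finset.sum_sub_distrib, Finset.sum_sub_distrib, Finset.sum_const,
        ← Finset.sum_mul, sumlin x0 u a hc, Nat.card_Ioc, nsmul_eq_mul, Nat.cast_sub hc]
      ring
    have hEeq : (Real.log ((M-a).factorial : ℝ) - Real.log (a.factorial : ℝ))
        - (Real.log ((M-u).factorial : ℝ) - Real.log (u.factorial : ℝ))
        + ((a:ℝ) - (u:ℝ))*C + D/2*((a:ℝ)-(u:ℝ))^2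
        = (D - B)*((a:ℝ)-u)^2/2 - B*(((a:ℝ)-u)*((u:ℝ) - x0 + 1/2))
          - ∑ m ∈ Finset.Ioc u a,
            (Real.log (m:ℝ) + Real.log ((M:ℝ) + 1 - (m:ℝ)) - C - ((m:ℝ)-x0)*B) := by
      rw [htele, hsplit]; ring
    rw [hEeq, habs]
    apply assemble ρ ((a:ℝ)-u) _ hρ4 hs
    have hS := hψsum u a hc haM (Or.inl rfl) (by rw [← habs]; exact ht)
    have t1 : |(D - B)*((a:ℝ)-u)^2/2| ≤ 1/ρ^2 * ((a:ℝ)-u)^2/2 := by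
      rw [show (D - B)*((a:ℝ)-u)^2/2 = (D-B) * (((a:ℝ)-u)^2/2) from by ring, abs_mul,
        abs_of_nonneg (by positivity : (0:ℝ) ≤ ((a:ℝ)-u)^2/2)]
      have := mul_le_mul_of_nonneg_right hDB (by positivity : (0:ℝ) ≤ ((a:ℝ)-u)^2/2)
      linarith
    have t2 : |B*(((a:ℝ)-u)*((u:ℝ) - x0 + 1/2))| ≤ 3/(2*ρ)*((a:ℝ)-u) := by
      have hκ0 : (0:ℝ) ≤ (u:ℝ) - x0 + 1/2 := by rw [hx0q]; linarith
      have hκ1 : (u:ℝ) - x0 + 1/2 ≤ 1 := by rw [hx0q]; linarith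
      rw [abs_of_nonneg (by positivity)]
      nlinarith [mul_nonneg hB0 hs]
    refine le_trans (abs3 _ _ _) ?_
    linarith [t1, t2, hS]
  · -- case a ≤ u
    have hs : (0:ℝ) ≤ (u:ℝ) - a := by
      have := Nat.cast_le (α := ℝ).2 hc; linarith
    have habs : |(a:ℝ) - u| = (u:ℝ) - a := by
      rw [abs_sub_comm, abs_of_nonneg hs]
    have htele := tele M a u hc huM
    have hsplit : ∑ m ∈ Finset.Ioc a u, (Real.log (m:ℝ) + Real.log ((M:ℝ) + 1 - (m:ℝ)))
        = ((u:ℝ)-a)*C + B*(((u:ℝ)-a)^2/2 + ((u:ℝ)-a)*((a:ℝ) - x0 + 1/2))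
          + ∑ m ∈ Finset.Ioc a u,
            (Real.log (m:ℝ) + Real.log ((M:ℝ) + 1 - (m:ℝ)) - C - ((m:ℝ)-x0)*B) := by
      rw [Finset.sum_sub_distrib, Finset.sum_sub_distrib, Finset.sum_const,
        ← Finset.sum_mul, sumlin x0 a u hc, Nat.card_Ioc, nsmul_eq_mul, Nat.cast_sub hc]
      ring
    have hEeq : (Real.log ((M-a).factorial : ℝ) - Real.log (a.factorial : ℝ))
        - (Real.log ((M-u).factorial : ℝ) - Real.log (u.factorial : ℝ))
        + ((a:ℝ) - (u:ℝ))*C + D/2*((a:ℝ)-(u:ℝ))^2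
        = (D - B)*((u:ℝ)-a)^2/2 - (-(B*(((u:ℝ)-a)*((u:ℝ) - x0 + 1/2))))
          - (-(∑ m ∈ Finset.Ioc a u,
            (Real.log (m:ℝ) + Real.log ((M:ℝ) + 1 - (m:ℝ)) - C - ((m:ℝ)-x0)*B))) := by
      have hFa : (Real.log ((M-u).factorial : ℝ) - Real.log (u.factorial : ℝ))
          - (Real.log ((M-a).factorial : ℝ) - Real.log (a.factorial : ℝ))
          = -(((u:ℝ)-a)*C + B*(((u:ℝ)-a)^2/2 + ((u:ℝ)-a)*((a:ℝ) - x0 + 1/2))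
            + ∑ m ∈ Finset.Ioc a u,
              (Real.log (m:ℝ) + Real.log ((M:ℝ) + 1 - (m:ℝ)) - C - ((m:ℝ)-x0)*B)) := by
        rw [htele, hsplit]
      linear_combination -hFa
    rw [hEeq, habs]
    apply assemble ρ ((u:ℝ)-a) _ hρ4 hs
    have hS := hψsum a u hc huM (Or.inr rfl) (by rw [← habs]; exact ht)
    have t1 : |(D - B)*((u:ℝ)-a)^2/2| ≤ 1/ρ^2 * ((u:ℝ)-a)^2/2 := by
      rw [show (D - B)*((u:ℝ)-a)^2/2 = (D-B) * (((u:ℝ)-a)^2/2) from by ring, abs_mul,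
        abs_of_nonneg (by positivity : (0:ℝ) ≤ ((u:ℝ)-a)^2/2)]
      have := mul_le_mul_of_nonneg_right hDB (by positivity : (0:ℝ) ≤ ((u:ℝ)-a)^2/2)
      linarith
    have t2 : |(-(B*(((u:ℝ)-a)*((u:ℝ) - x0 + 1/2))))| ≤ 3/(2*ρ)*((u:ℝ)-a) := by
      have hκ0 : (0:ℝ) ≤ (u:ℝ) - x0 + 1/2 := by rw [hx0q]; linarith
      have hκ1 : (u:ℝ) - x0 + 1/2 ≤ 1 := by rw [hx0q]; linarith
      rw [abs_neg, abs_of_nonneg (by positivity)]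
      nlinarith [mul_nonneg hB0 hs]
    have t3 : |(-(∑ m ∈ Finset.Ioc a u,
        (Real.log (m:ℝ) + Real.log ((M:ℝ) + 1 - (m:ℝ)) - C - ((m:ℝ)-x0)*B)))|
        ≤ ((u:ℝ) - a) * (16/5*(((u:ℝ)-a)+1/2)^2/ρ^2) := by
      rw [abs_neg]; exact hS
    refine le_trans (abs3 _ _ _) ?_
    linarith [t1, t2, t3]



set_option maxHeartbeats 1000000 in
/-- **Lemma 4 (discrete Gaussian approximation of w).** Fix k ≥ 3, let
ρ = M/k, let U be the circulant matrix built from q = ⌊M/k⌋ and r = M mod k,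
and for A ∈ A_{k,M} set T = A − U.  If ρ ≥ 4 and max_{i,j}|t_{i,j}| ≤ ρ/9, then
|log(w(A)/w(U)) − log w̃(A)| ≤ (4/ρ²) Σ (|t_{i,j}|+1)³ + (3/(2ρ)) Σ |t_{i,j}|,
where w̃(A) = exp(−½ · ((k−2)/(k−1)) · (1/ρ) · Σ t_{i,j}²). -/
theorem gaussian_approximation_of_w
    (k M : ℕ) (hk : 3 ≤ k) (hM : 1 ≤ M)
    (ρ : ℝ) (hρ : ρ = (M : ℝ) / k)
    (q r : ℕ) (hq : q = M / k) (hr : r = M % k)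
    (U : Fin k → Fin k → ℕ)
    (hU : ∀ i j, U i j = if ((j : ℕ) + k - (i : ℕ)) % k < r then q + 1 else q)
    (w : (Fin k → Fin k → ℕ) → ℝ)
    (hw : ∀ B, w B = ∏ i, ∏ j, ((M - B i j).factorial : ℝ) / ((B i j).factorial : ℝ))
    (A : Fin k → Fin k → ℕ)
    (hArow : ∀ i, ∑ j, A i j = M) (hAcol : ∀ j, ∑ i, A i j = M)
    (t : Fin k → Fin k → ℝ) (ht : ∀ i j, t i j = (A i j : ℝ) - (U i j : ℝ))
    (hρ4 : 4 ≤ ρ) (htmax : ∀ i j, |t i j| ≤ ρ / 9) :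
    |Real.log (w A / w U) -
        Real.log (Real.exp (-(1 / 2) * (((k : ℝ) - 2) / ((k : ℝ) - 1)) * (1 / ρ) *
          ∑ i, ∑ j, t i j ^ 2))| ≤
      4 / ρ ^ 2 * ∑ i, ∑ j, (|t i j| + 1) ^ 3 +
        3 / (2 * ρ) * ∑ i, ∑ j, |t i j| := by
  have hk0 : 0 < k := by omega
  have hkR : (3:ℝ) ≤ (k:ℝ) := by exact_mod_cast hk
  have hρ0 : (0:ℝ) < ρ := by linarith
  have hMqr : M = k*q + r := by rw [hq, hr]; exact (Nat.div_add_mod M k).symm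
  have hrk : r < k := by rw [hr]; exact Nat.mod_lt M hk0
  have hMR : (M:ℝ) = ρ * k := by rw [hρ]; field_simp
  have hMcast : (M:ℝ) = (k:ℝ)*(q:ℝ) + (r:ℝ) := by exact_mod_cast hMqr
  have hrR0 : (0:ℝ) ≤ (r:ℝ) := Nat.cast_nonneg r
  have hrRk : (r:ℝ) ≤ (k:ℝ) := by exact_mod_cast le_of_lt hrk
  have hqle : (q:ℝ) ≤ ρ := by nlinarith
  have hqge : ρ ≤ (q:ℝ) + 1 := by nlinarith
  set x0 : ℝ := (q:ℝ) + 1/2 with hx0def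
  set y0 : ℝ := (M:ℝ) + 1 - x0 with hy0def
  have hxy : y0 + x0 = (M:ℝ) + 1 := by rw [hy0def]; ring
  have hx0ρ : 7*ρ/8 ≤ x0 := by rw [hx0def]; linarith
  have hy0ρ : 2*ρ ≤ y0 := by
    have h3ρ : 3*ρ ≤ ρ*(k:ℝ) := by nlinarith
    rw [hy0def, hx0def]; rw [hMR]; linarith
  clear_value x0 y0
  have hx0p : (0:ℝ) < x0 := by linarith
  have hy0p : (0:ℝ) < y0 := by linarith
  set C : ℝ := Real.log x0 + Real.log y0 with hCdef
  set B : ℝ := 1/x0 - 1/y0 with hBdef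
  set D : ℝ := ((k:ℝ)-2)/((k:ℝ)-1)*(1/ρ) with hDdef
  clear_value C B D
  have hB0 : (0:ℝ) ≤ B := by
    have hxle : x0 ≤ y0 := by linarith
    have := one_div_le_one_div_of_le hx0p hxle
    rw [hBdef]; linarith
  have hB1 : B ≤ 3/(2*ρ) := by
    have h1 : 1/x0 ≤ 3/(2*ρ) := by
      rw [div_le_div_iff₀ hx0p (by positivity)]; linarith
    have h2 : (0:ℝ) ≤ 1/y0 := by positivity
    rw [hBdef]; linarith
  have hDB : |D - B| ≤ 1/ρ^2 := by
    have hk1p : (0:ℝ) < (k:ℝ) - 1 := by linarith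
    have hD' : D = 1/ρ - 1/(((k:ℝ)-1)*ρ) := by
      rw [hDdef]; field_simp; ring
    have e1 : |1/ρ - 1/x0| ≤ 4/7*(1/ρ^2) := by
      have he : 1/ρ - 1/x0 = (x0 - ρ)/(ρ*x0) := by field_simp
      rw [he, abs_div, abs_of_pos (by positivity : (0:ℝ) < ρ*x0)]
      have hnum : |x0 - ρ| ≤ 1/2 := abs_le.2 ⟨by rw [hx0def]; linarith, by rw [hx0def]; linarith⟩
      have hden : (7/8)*ρ^2 ≤ ρ*x0 := by nlinarith
      calc |x0-ρ|/(ρ*x0) ≤ (1/2)/((7/8)*ρ^2) :=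
            div_le_div₀ (by norm_num) hnum (by positivity) hden
        _ = 4/7*(1/ρ^2) := by field_simp; ring
    have e2 : |1/(((k:ℝ)-1)*ρ) - 1/y0| ≤ 3/8*(1/ρ^2) := by
      have hkρp : (0:ℝ) < ((k:ℝ)-1)*ρ := by positivity
      have he : 1/(((k:ℝ)-1)*ρ) - 1/y0 = (y0 - ((k:ℝ)-1)*ρ)/((((k:ℝ)-1)*ρ)*y0) := by
        field_simp
      rw [he, abs_div, abs_of_pos (by positivity : (0:ℝ) < (((k:ℝ)-1)*ρ)*y0)]
      have hnum : |y0 - ((k:ℝ)-1)*ρ| ≤ 3/2 := by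
        have hyv : y0 - ((k:ℝ)-1)*ρ = ρ + 1/2 - (q:ℝ) := by
          rw [hy0def, hx0def, hMR]; ring
        rw [hyv]; exact abs_le.2 ⟨by linarith, by linarith⟩
      have hden : 4*ρ^2 ≤ (((k:ℝ)-1)*ρ)*y0 := by nlinarith
      calc |y0 - ((k:ℝ)-1)*ρ|/((((k:ℝ)-1)*ρ)*y0) ≤ (3/2)/(4*ρ^2) :=
            div_le_div₀ (by norm_num) hnum (by positivity) hden
        _ = 3/8*(1/ρ^2) := by field_simp; ring
    have hsplit : D - B = (1/ρ - 1/x0) - (1/(((k:ℝ)-1)*ρ) - 1/y0) := by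
      rw [hD', hBdef]; ring
    have hpos : (0:ℝ) ≤ 1/ρ^2 := by positivity
    rw [hsplit]
    have h1 := abs_le.1 e1
    have h2 := abs_le.1 e2
    exact abs_le.2 ⟨by linarith, by linarith⟩
  -- structural facts
  have hUq : ∀ i j, q ≤ U i j ∧ U i j ≤ q + 1 := by
    intro i j; rw [hU i j]; split <;> omega
  have hq1 : 1 ≤ q := by
    have h1 : (1:ℝ) ≤ (q:ℝ) := by linarith
    exact_mod_cast h1
  have hq1M : q + 1 ≤ M := by
    calc q + 1 ≤ 3*q := by omega
      _ ≤ k*q := Nat.mul_le_mul_right q hk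
      _ ≤ M := by omega
  have hUle : ∀ i j, U i j ≤ M := fun i j => le_trans (hUq i j).2 hq1M
  have hAle : ∀ i j, A i j ≤ M := by
    intro i j; rw [← hArow i]
    exact Finset.single_le_sum (fun _ _ => Nat.zero_le _) (Finset.mem_univ j)
  have hUrow : ∀ i, ∑ j, U i j = M := by
    intro i
    calc ∑ j, U i j = ∑ j : Fin k, (if ((j:ℕ) + k - (i:ℕ)) % k < r then q + 1 else q) :=
          Finset.sum_congr rfl (fun j _ => hU i j)
      _ = k*q + r := urow k q r hk0 (le_of_lt hrk) i
      _ = M := hMqr.symm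
  have hsum0 : ∑ i, ∑ j, t i j = 0 := by
    have hrow0 : ∀ i, ∑ j, t i j = 0 := by
      intro i
      have h1 : ∑ j, t i j = ∑ j, ((A i j : ℝ) - (U i j : ℝ)) :=
        Finset.sum_congr rfl fun j _ => ht i j
      have hA' : ∑ j, ((A i j:ℝ)) = (M:ℝ) := by exact_mod_cast hArow i
      have hU' : ∑ j, ((U i j:ℝ)) = (M:ℝ) := by exact_mod_cast hUrow i
      rw [h1, Finset.sum_sub_distrib, hA', hU', sub_self]
    simp [hrow0]
  -- logs
  have hfacpos : ∀ n : ℕ, (0:ℝ) < (n.factorial : ℝ) := fun n => by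
    exact_mod_cast n.factorial_pos
  have hwpos : ∀ B' : Fin k → Fin k → ℕ, (0:ℝ) < w B' := by
    intro B'; rw [hw B']
    exact Finset.prod_pos fun i _ => Finset.prod_pos fun j _ =>
      div_pos (hfacpos _) (hfacpos _)
  have hlogw : ∀ B' : Fin k → Fin k → ℕ, Real.log (w B')
      = ∑ i, ∑ j, (Real.log ((M - B' i j).factorial : ℝ) - Real.log ((B' i j).factorial : ℝ)) := by
    intro B'; rw [hw B', Real.log_prod]
    · refine Finset.sum_congr rfl fun i _ => ?_
      rw [Real.log_prod]
      · exact Finset.sum_congr rfl fun j _ => Real.log_div (hfacpos _).ne' (hfacpos _).ne'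
      · intro j _; exact (div_pos (hfacpos _) (hfacpos _)).ne'
    · intro i _; exact (Finset.prod_pos fun j _ => div_pos (hfacpos _) (hfacpos _)).ne'
  rw [Real.log_div (hwpos A).ne' (hwpos U).ne', Real.log_exp, hlogw A, hlogw U]
  have hsplit2 : ∑ i, ∑ j, ((Real.log ((M - A i j).factorial:ℝ) - Real.log ((A i j).factorial:ℝ))
        - (Real.log ((M - U i j).factorial:ℝ) - Real.log ((U i j).factorial:ℝ))
        + t i j * C + D/2 * (t i j)^2)
      = (∑ i, ∑ j, (Real.log ((M - A i j).factorial:ℝ) - Real.log ((A i j).factorial:ℝ)))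
        - (∑ i, ∑ j, (Real.log ((M - U i j).factorial:ℝ) - Real.log ((U i j).factorial:ℝ)))
        + (∑ i, ∑ j, t i j) * C + D/2 * (∑ i, ∑ j, (t i j)^2) := by
    simp only [Finset.sum_add_distrib, Finset.sum_sub_distrib, ← Finset.sum_mul, ← Finset.mul_sum]
  have hEeq : (∑ i, ∑ j, (Real.log ((M - A i j).factorial:ℝ) - Real.log ((A i j).factorial:ℝ)))
      - (∑ i, ∑ j, (Real.log ((M - U i j).factorial:ℝ) - Real.log ((U i j).factorial:ℝ)))
      - (-(1 / 2) * (((k : ℝ) - 2) / ((k : ℝ) - 1)) * (1 / ρ) * ∑ i, ∑ j, t i j ^ 2)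
      = ∑ i, ∑ j, ((Real.log ((M - A i j).factorial:ℝ) - Real.log ((A i j).factorial:ℝ))
        - (Real.log ((M - U i j).factorial:ℝ) - Real.log ((U i j).factorial:ℝ))
        + t i j * C + D/2 * (t i j)^2) := by
    rw [hsplit2, hsum0, hDdef]; ring
  rw [hEeq]
  have habs : |∑ i, ∑ j, ((Real.log ((M - A i j).factorial:ℝ) - Real.log ((A i j).factorial:ℝ))
        - (Real.log ((M - U i j).factorial:ℝ) - Real.log ((U i j).factorial:ℝ))
        + t i j * C + D/2 * (t i j)^2)|
      ≤ ∑ i, ∑ j, |(Real.log ((M - A i j).factorial:ℝ) - Real.log ((A i j).factorial:ℝ))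
        - (Real.log ((M - U i j).factorial:ℝ) - Real.log ((U i j).factorial:ℝ))
        + t i j * C + D/2 * (t i j)^2| :=
    le_trans (Finset.abs_sum_le_sum_abs _ _)
      (Finset.sum_le_sum fun i _ => Finset.abs_sum_le_sum_abs _ _)
  refine le_trans habs ?_
  have hterm : ∀ i j, |(Real.log ((M - A i j).factorial:ℝ) - Real.log ((A i j).factorial:ℝ))
        - (Real.log ((M - U i j).factorial:ℝ) - Real.log ((U i j).factorial:ℝ))
        + t i j * C + D/2 * (t i j)^2|
      ≤ 4/ρ^2*(|t i j| + 1)^3 + 3/(2*ρ)*|t i j| := by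
    intro i j
    rw [ht i j]
    have ht' : |(A i j:ℝ) - (U i j:ℝ)| ≤ ρ/9 := by rw [← ht i j]; exact htmax i j
    exact entry_bound M (A i j) (U i j) q ρ x0 y0 C B D hρ4 hx0def hxy hx0ρ hy0ρ
      hCdef hBdef hB0 hB1 hDB (hUq i j).1 (hUq i j).2 (hAle i j) (hUle i j) ht'
  refine le_trans (Finset.sum_le_sum fun i _ => Finset.sum_le_sum fun j _ => hterm i j) ?_
  simp only [Finset.sum_add_distrib, ← Finset.mul_sum]
  exact le_rfl
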